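/- For every x ∈ (0,1): as ε → 0⁺, w(x + iε) → i·√(x(1−x)) and w(x − iε) → −i·√(x(1−x)). -/

import Mathlib

open Complex Metric Filter
open Topology

/-- `w(z) = z·((z−1)/z)^{1/2}` with the principal square root. -/
noncomputable def wfun (z : ℂ) : ℂ := z * ((z - 1) / z) ^ ((1 : ℂ)/2)

-- key computation: final value
lemma key_val (x : ℝ) (hx0 : 0 < x) (hx1 : x < 1) :
    (x:ℂ) * Complex.exp ((Real.log ((1-x)/x) + Real.pi * I) * (1/2))
      = I * (Real.sqrt (x * (1 - x)) : ℂ) := by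
  have hs : (0:ℝ) < (1-x)/x := div_pos (by linarith) hx0
  have h1 : ((Real.log ((1-x)/x) : ℂ) + Real.pi * I) * (1/2)
      = ((Real.log ((1-x)/x) / 2 : ℝ) : ℂ) + (Real.pi/2 : ℝ) * I := by
    push_cast; ring
  rw [h1, Complex.exp_add, ← Complex.ofReal_exp, Complex.exp_mul_I]
  rw [← Complex.ofReal_cos, ← Complex.ofReal_sin]
  norm_num [Real.cos_pi_div_two, Real.sin_pi_div_two]
  have h2 : Real.exp (Real.log ((1-x)/x) / 2) = Real.sqrt ((1-x)/x) := by
    rw [Real.sqrt_eq_rpow, Real.rpow_def_of_pos hs]; ring_nf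
  have h2' : Complex.exp ((Real.log ((1-x)/x):ℂ)/2) = ((Real.sqrt ((1-x)/x) :ℝ):ℂ) := by
    rw [show ((Real.log ((1-x)/x):ℂ)/2) = ((Real.log ((1-x)/x)/2 :ℝ):ℂ) by push_cast; ring,
      ← Complex.ofReal_exp, h2]
  rw [h2']
  have h3 : Real.sqrt (x * (1-x)) = x * Real.sqrt ((1-x)/x) := by
    rw [← Real.sqrt_sq hx0.le, ← Real.sqrt_mul (sq_nonneg x)]
    congr 1; field_simp; rw [Real.sqrt_sq hx0.le]
  rw [h3]; push_cast; ring

lemma key_val_neg (x : ℝ) (hx0 : 0 < x) (hx1 : x < 1) :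
    (x:ℂ) * Complex.exp ((Real.log ((1-x)/x) - Real.pi * I) * (1/2))
      = -(I * (Real.sqrt (x * (1 - x)) : ℂ)) := by
  have h1 : ((Real.log ((1-x)/x) : ℂ) - Real.pi * I) * (1/2)
      = (Real.log ((1-x)/x) + Real.pi * I) * (1/2) - Real.pi * I := by ring
  rw [h1, Complex.exp_sub, Complex.exp_pi_mul_I, div_neg, div_one, mul_neg,
    key_val x hx0 hx1]

lemma im_ratio (x ε : ℝ) :
    ((((x:ℂ) + ε*I) - 1) / ((x:ℂ) + ε*I)).im
      = ε / Complex.normSq ((x:ℂ) + ε*I) := by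
  simp [Complex.div_im, Complex.normSq_apply]
  ring

lemma im_ratio' (x ε : ℝ) :
    ((((x:ℂ) - ε*I) - 1) / ((x:ℂ) - ε*I)).im
      = -ε / Complex.normSq ((x:ℂ) - ε*I) := by
  simp [Complex.div_im, Complex.normSq_apply]
  ring

/-- For `x ∈ (0,1)`, as `ε → 0⁺`, `w(x + iε) → i√(x(1−x))` and
`w(x − iε) → −i√(x(1−x))`. -/
theorem stmt_10 (x : ℝ) (hx : x ∈ Set.Ioo (0:ℝ) 1) :
    Tendsto (fun ε : ℝ => wfun ((x : ℂ) + ε * I)) (nhdsWithin 0 (Set.Ioi 0))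
      (nhds (I * (Real.sqrt (x * (1 - x)) : ℂ))) ∧
    Tendsto (fun ε : ℝ => wfun ((x : ℂ) - ε * I)) (nhdsWithin 0 (Set.Ioi 0))
      (nhds (-(I * (Real.sqrt (x * (1 - x)) : ℂ)))) := by
  obtain ⟨hx0, hx1⟩ := hx
  have hs : (0:ℝ) < (1-x)/x := div_pos (by linarith) hx0
  have hxne : (x:ℂ) ≠ 0 := by exact_mod_cast hx0.ne'
  set t : ℂ := ((-((1-x)/x) : ℝ) : ℂ) with ht
  have htre : t.re < 0 := by simp [ht]; linarith
  have htim : t.im = 0 := by simp [ht]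
  have habs : ‖t‖ = (1-x)/x := by
    rw [ht, Complex.norm_real, Real.norm_eq_abs, abs_neg, abs_of_pos hs]
  have hz : ∀ ε:ℝ, ((x:ℂ) + ε*I) ≠ 0 := by
    intro ε h
    have := congrArg Complex.re h
    simp at this
    exact hx0.ne' this
  have hz' : ∀ ε:ℝ, ((x:ℂ) - ε*I) ≠ 0 := by
    intro ε h
    have := congrArg Complex.re h
    simp at this
    exact hx0.ne' this
  have hns : ∀ ε:ℝ, 0 < Complex.normSq ((x:ℂ) + ε*I) :=
    fun ε => Complex.normSq_pos.mpr (hz ε)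
  have hns' : ∀ ε:ℝ, 0 < Complex.normSq ((x:ℂ) - ε*I) :=
    fun ε => Complex.normSq_pos.mpr (hz' ε)
  have hb : Tendsto (fun ε:ℝ => ((x:ℂ) + ε*I)) (𝓝 0) (𝓝 (x:ℂ)) := by
    have h0 : Tendsto (fun ε:ℝ => ((ε : ℝ):ℂ)) (𝓝 0) (𝓝 0) := by
      simpa using Complex.continuous_ofReal.tendsto (0:ℝ)
    simpa using (h0.mul_const I).const_add (x:ℂ)
  have hb' : Tendsto (fun ε:ℝ => ((x:ℂ) - ε*I)) (𝓝 0) (𝓝 (x:ℂ)) := by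
    have h0 : Tendsto (fun ε:ℝ => ((ε : ℝ):ℂ)) (𝓝 0) (𝓝 0) := by
      simpa using Complex.continuous_ofReal.tendsto (0:ℝ)
    simpa using ((h0.mul_const I).const_sub (x:ℂ))
  have h3 : ((x:ℂ)-1)/(x:ℂ) = t := by
    rw [ht]; push_cast; field_simp; ring
  constructor
  · -- upper half
    have hf : Tendsto (fun ε:ℝ => (((x:ℂ)+ε*I)-1)/((x:ℂ)+ε*I)) (𝓝[>] (0:ℝ)) (𝓝 t) := by
      have h2 : Tendsto (fun ε:ℝ => (((x:ℂ)+ε*I)-1)/((x:ℂ)+ε*I)) (𝓝 0)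
          (𝓝 (((x:ℂ)-1)/(x:ℂ))) := (hb.sub_const 1).div hb hxne
      rw [h3] at h2
      exact h2.mono_left nhdsWithin_le_nhds
    have hfW : Tendsto (fun ε:ℝ => (((x:ℂ)+ε*I)-1)/((x:ℂ)+ε*I)) (𝓝[>] (0:ℝ))
        (𝓝[{z:ℂ | 0 ≤ z.im}] t) := by
      rw [tendsto_nhdsWithin_iff]
      refine ⟨hf, ?_⟩
      filter_upwards [self_mem_nhdsWithin] with ε hε
      show (0:ℝ) ≤ _
      rw [im_ratio]
      exact le_of_lt (div_pos hε (hns ε))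
    have hlog := (Complex.tendsto_log_nhdsWithin_im_nonneg_of_re_neg_of_im_zero htre htim).comp hfW
    rw [habs] at hlog
    have hexp : Tendsto (fun ε:ℝ => ((x:ℂ)+ε*I) *
        Complex.exp (Complex.log ((((x:ℂ)+ε*I)-1)/((x:ℂ)+ε*I)) * (1/2))) (𝓝[>] (0:ℝ))
        (𝓝 ((x:ℂ) * Complex.exp ((Real.log ((1-x)/x) + Real.pi * I) * (1/2)))) := by
      have := (hb.mono_left nhdsWithin_le_nhds).mul
        ((Complex.continuous_exp.tendsto _).comp (hlog.mul_const (1/2)))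
      simpa [Function.comp_def] using this
    rw [key_val x hx0 hx1] at hexp
    refine hexp.congr' ?_
    filter_upwards [self_mem_nhdsWithin] with ε hε
    have hne : (((x:ℂ)+ε*I)-1)/((x:ℂ)+ε*I) ≠ 0 := by
      intro h
      have h2 := congrArg Complex.im h
      rw [im_ratio] at h2
      simp only [Complex.zero_im] at h2
      exact absurd h2 (ne_of_gt (div_pos hε (hns ε)))
    rw [wfun, Complex.cpow_def_of_ne_zero hne]
  · -- lower half
    have hf : Tendsto (fun ε:ℝ => (((x:ℂ)-ε*I)-1)/((x:ℂ)-ε*I)) (𝓝[>] (0:ℝ)) (𝓝 t) := by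
      have h2 : Tendsto (fun ε:ℝ => (((x:ℂ)-ε*I)-1)/((x:ℂ)-ε*I)) (𝓝 0)
          (𝓝 (((x:ℂ)-1)/(x:ℂ))) := (hb'.sub_const 1).div hb' hxne
      rw [h3] at h2
      exact h2.mono_left nhdsWithin_le_nhds
    have hfW : Tendsto (fun ε:ℝ => (((x:ℂ)-ε*I)-1)/((x:ℂ)-ε*I)) (𝓝[>] (0:ℝ))
        (𝓝[{z:ℂ | z.im < 0}] t) := by
      rw [tendsto_nhdsWithin_iff]
      refine ⟨hf, ?_⟩
      filter_upwards [self_mem_nhdsWithin] with ε hε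
      show _ < (0:ℝ)
      rw [im_ratio']
      exact div_neg_of_neg_of_pos (by linarith [Set.mem_Ioi.mp hε]) (hns' ε)
    have hlog := (Complex.tendsto_log_nhdsWithin_im_neg_of_re_neg_of_im_zero htre htim).comp hfW
    rw [habs] at hlog
    have hexp : Tendsto (fun ε:ℝ => ((x:ℂ)-ε*I) *
        Complex.exp (Complex.log ((((x:ℂ)-ε*I)-1)/((x:ℂ)-ε*I)) * (1/2))) (𝓝[>] (0:ℝ))
        (𝓝 ((x:ℂ) * Complex.exp ((Real.log ((1-x)/x) - Real.pi * I) * (1/2)))) := by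
      have := (hb'.mono_left nhdsWithin_le_nhds).mul
        ((Complex.continuous_exp.tendsto _).comp (hlog.mul_const (1/2)))
      simpa [Function.comp_def, sub_eq_add_neg, mul_comm] using this
    rw [key_val_neg x hx0 hx1] at hexp
    refine hexp.congr' ?_
    filter_upwards [self_mem_nhdsWithin] with ε hε
    have hne : (((x:ℂ)-ε*I)-1)/((x:ℂ)-ε*I) ≠ 0 := by
      intro h
      have h2 := congrArg Complex.im h
      rw [im_ratio'] at h2
      simp only [Complex.zero_im] at h2
      exact absurd h2 (ne_of_lt (div_neg_of_neg_of_pos (by linarith [Set.mem_Ioi.mp hε]) (hns' ε)))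
    rw [wfun, Complex.cpow_def_of_ne_zero hne]
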